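/- The function H_1(y) = h_1^{-1}(y)/y is strictly decreasing for y > 0, where h_1(x) = x·tanh(x) maps (0, ∞) bijectively onto (0, ∞). -/
import Mathlib


lemma tanh_pos_of_pos {x : ℝ} (hx : 0 < x) : 0 < Real.tanh x := by
  rw [Real.tanh_eq_sinh_div_cosh]
  exact div_pos (Real.sinh_pos_iff.2 hx) (Real.cosh_pos x)

lemma tanh_lt_tanh_of_lt {u v : ℝ} (huv : u < v) : Real.tanh u < Real.tanh v := by
  rw [Real.tanh_eq_sinh_div_cosh, Real.tanh_eq_sinh_div_cosh,
    div_lt_div_iff₀ (Real.cosh_pos u) (Real.cosh_pos v)]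
  have h : 0 < Real.sinh (v - u) := Real.sinh_pos_iff.2 (by linarith)
  rw [Real.sinh_sub] at h
  nlinarith [Real.cosh_pos u, Real.cosh_pos v]

/-- `h₁(x) = x·tanh x` maps `(0, ∞)` bijectively onto `(0, ∞)`; `hinv` is its inverse.
The function `H₁(y) = h₁⁻¹(y)/y` is strictly decreasing on `(0, ∞)`. -/
theorem H1_strictAnti (hinv : ℝ → ℝ)
    (h_left : ∀ x > (0:ℝ), hinv (x * Real.tanh x) = x)
    (h_right : ∀ y ∈ Set.Ioi (0:ℝ),
      hinv y > 0 ∧ hinv y * Real.tanh (hinv y) = y) :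
    StrictAntiOn (fun y => hinv y / y) (Set.Ioi 0) := by
  intro a ha b hb hab
  obtain ⟨hua, ha2⟩ := h_right a ha
  obtain ⟨hub, hb2⟩ := h_right b hb
  have hta := tanh_pos_of_pos hua
  have htb := tanh_pos_of_pos hub
  have hlt : hinv a < hinv b := by
    by_contra h
    push_neg at h
    rcases eq_or_lt_of_le h with h | h
    · rw [h] at hb2; linarith
    · have := tanh_lt_tanh_of_lt h
      nlinarith
  have htlt := tanh_lt_tanh_of_lt hlt
  show hinv b / b < hinv a / a
  set u := hinv a with hu
  set v := hinv b with hv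
  rw [← ha2, ← hb2, div_lt_div_iff₀ (by positivity) (by positivity)]
  nlinarith [mul_lt_mul_of_pos_left htlt (mul_pos hua hub)]
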